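/- Let (X,d,≤) be an ordered metric space satisfying (b03): for every x,y ∈ X there exists a <>-chain between x and y, and let e be the associated chain metric, e(x,y) = inf{ d(z_1,z_2)+…+d(z_{k−1},z_k) : z_1,…,z_k a <>-chain between x and y }. Assume d is complete and (a06): every <>-ascending sequence (x_n) that d-converges to x has a subsequence (x_{q(n)}) with x_{q(n)} <> x for all n. Then the metric e is complete on X. -/

import Mathlib

open Filter Topology

set_option linter.unusedSectionVars false

/-- A `<>`-chain between `x` and `y`: a finite list `z₁,…,z_k` (`k ≥ 2`) with
`z₁ = x`, `z_k = y`, and consecutive terms comparable. -/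
def IsChainBetween {X : Type*} [PartialOrder X] (l : List X) (x y : X) : Prop :=
  2 ≤ l.length ∧ l.head? = some x ∧ l.getLast? = some y ∧
    l.Chain' (fun a b : X => a ≤ b ∨ b ≤ a)

/-- The sum `d(z₁,z₂) + … + d(z_{k-1},z_k)` of consecutive distances along a list. -/
def chainLength {X : Type*} [MetricSpace X] (l : List X) : ℝ :=
  ((l.zip l.tail).map fun p => dist p.1 p.2).sum

/-- The chain metric `e(x,y)` — the infimum of lengths of `<>`-chains joining `x` to `y`. -/
noncomputable def chainDist {X : Type*} [MetricSpace X] [PartialOrder X] (x y : X) : ℝ :=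
  sInf {s : ℝ | ∃ l : List X, IsChainBetween l x y ∧ s = chainLength l}

section API
variable {X : Type*} [MetricSpace X] [PartialOrder X]

lemma chainLength_nil : chainLength ([] : List X) = 0 := rfl
lemma chainLength_singleton (a : X) : chainLength [a] = 0 := rfl
lemma chainLength_cons_cons (a b : X) (t : List X) :
    chainLength (a :: b :: t) = dist a b + chainLength (b :: t) := by
  simp [chainLength]

lemma chainLength_nonneg (l : List X) : 0 ≤ chainLength l := by
  apply List.sum_nonneg
  intro r hr
  simp only [List.mem_map] at hr
  obtain ⟨p, -, rfl⟩ := hr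
  exact dist_nonneg

lemma dist_head_getLast_le (a : X) (t : List X) :
    dist a ((a :: t).getLast (by simp)) ≤ chainLength (a :: t) := by
  induction t generalizing a with
  | nil => simp [chainLength_singleton]
  | cons b t ih =>
    rw [chainLength_cons_cons]
    calc dist a ((a :: b :: t).getLast (by simp))
        ≤ dist a b + dist b ((b :: t).getLast (by simp)) := by
          rw [List.getLast_cons (by simp)]; exact dist_triangle _ _ _
      _ ≤ dist a b + chainLength (b :: t) := by linarith [ih b]

lemma dist_le_chainLength {l : List X} {x y : X} (h : IsChainBetween l x y) :
    dist x y ≤ chainLength l := by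
  obtain ⟨hlen, hh, hl, -⟩ := h
  cases l with
  | nil => simp at hh
  | cons a t =>
    simp only [List.head?_cons, Option.some.injEq] at hh
    rw [List.getLast?_eq_getLast (List.cons_ne_nil a t)] at hl
    simp only [Option.some.injEq] at hl
    subst hh; rw [← hl]
    exact dist_head_getLast_le a t

lemma chainDist_le {l : List X} {x y : X} (h : IsChainBetween l x y) :
    chainDist x y ≤ chainLength l := by
  apply csInf_le
  · refine ⟨0, ?_⟩
    rintro s ⟨l', -, rfl⟩
    exact chainLength_nonneg l'
  · exact ⟨l, h, rfl⟩

lemma dist_le_chainDist (hb03 : ∀ x y : X, ∃ l : List X, IsChainBetween l x y) (x y : X) :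
    dist x y ≤ chainDist x y := by
  obtain ⟨l, hl⟩ := hb03 x y
  apply le_csInf
  · exact ⟨chainLength l, ⟨l, hl, rfl⟩⟩
  rintro s ⟨l', hl', rfl⟩
  exact dist_le_chainLength hl'

lemma isChainBetween_pair {x y : X} (h : x ≤ y ∨ y ≤ x) : IsChainBetween [x, y] x y := by
  refine ⟨by simp, by simp, by simp, ?_⟩
  exact List.isChain_pair.mpr h

lemma chainDist_le_dist {x y : X} (h : x ≤ y ∨ y ≤ x) : chainDist x y ≤ dist x y := by
  have := chainDist_le (isChainBetween_pair h)
  simpa [chainLength_cons_cons, chainLength_singleton] using this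

lemma chainLength_append (l1 l2 : List X) (h1 : l1 ≠ [])
    (h : l1.getLast? = l2.head?) :
    chainLength (l1 ++ l2.tail) = chainLength l1 + chainLength l2 := by
  induction l1 with
  | nil => exact absurd rfl h1
  | cons a t ih =>
    cases t with
    | nil =>
      cases l2 with
      | nil => simp at h
      | cons b u =>
        simp only [List.getLast?_singleton, List.head?_cons, Option.some.injEq] at h
        subst h
        simp [chainLength_singleton]
    | cons b u =>
      have hgl : (a :: b :: u).getLast? = (b :: u).getLast? := by
        rw [List.getLast?_cons_cons]
      rw [hgl] at h
      have := ih (by simp) h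
      simp only [List.cons_append] at *
      rw [chainLength_cons_cons, chainLength_cons_cons, this]
      ring

lemma IsChainBetween.trans {l1 l2 : List X} {x y z : X}
    (h1 : IsChainBetween l1 x y) (h2 : IsChainBetween l2 y z) :
    IsChainBetween (l1 ++ l2.tail) x z ∧
      chainLength (l1 ++ l2.tail) = chainLength l1 + chainLength l2 := by
  obtain ⟨len1, hh1, hl1, hc1⟩ := h1
  obtain ⟨len2, hh2, hl2, hc2⟩ := h2
  have hne1 : l1 ≠ [] := by rintro rfl; simp at len1
  have hne2 : l2 ≠ [] := by rintro rfl; simp at len2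
  have htl2 : l2.tail ≠ [] := by
    cases l2 with
    | nil => simp at len2
    | cons a t => cases t with
      | nil => simp at len2
      | cons b u => simp
  have hjoin : l1.getLast? = l2.head? := by rw [hl1, hh2]
  constructor
  · refine ⟨?_, ?_, ?_, ?_⟩
    · rw [List.length_append]; omega
    · rw [List.head?_append_of_ne_nil _ hne1]
      exact hh1
    · rw [List.getLast?_append_of_ne_nil _ htl2]
      cases l2 with
      | nil => exact absurd rfl hne2
      | cons a t =>
        cases t with
        | nil => simp at len2
        | cons b u =>
          simpa [List.getLast?_cons_cons] using hl2
    · apply List.IsChain.append hc1 hc2.tail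
      intro p hp q hq
      rw [hl1] at hp
      simp only [Option.mem_def, Option.some.injEq] at hp
      subst hp
      cases l2 with
      | nil => exact absurd rfl hne2
      | cons a t =>
        cases t with
        | nil => simp at len2
        | cons b u =>
          simp only [List.head?_cons, List.tail_cons, Option.mem_def, Option.some.injEq] at hq hh2
          subst hq
          rw [← hh2]
          exact (List.isChain_cons_cons.mp hc2).1
  · exact chainLength_append l1 l2 hne1 hjoin

lemma chainDist_nonneg (hb03 : ∀ x y : X, ∃ l : List X, IsChainBetween l x y) (x y : X) :
    0 ≤ chainDist x y :=
  le_trans dist_nonneg (dist_le_chainDist hb03 x y)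

lemma chainDist_self_nonpos (x : X) : chainDist x x ≤ 0 := by
  have := chainDist_le_dist (Or.inl (le_refl x))
  simpa using this

lemma chainDist_triangle (hb03 : ∀ x y : X, ∃ l : List X, IsChainBetween l x y) (x y z : X) :
    chainDist x z ≤ chainDist x y + chainDist y z := by
  obtain ⟨l1', hl1'⟩ := hb03 x y
  obtain ⟨l2', hl2'⟩ := hb03 y z
  have h1 : {s : ℝ | ∃ l : List X, IsChainBetween l x y ∧ s = chainLength l}.Nonempty :=
    ⟨chainLength l1', ⟨l1', hl1', rfl⟩⟩
  have h2 : {s : ℝ | ∃ l : List X, IsChainBetween l y z ∧ s = chainLength l}.Nonempty :=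
    ⟨chainLength l2', ⟨l2', hl2', rfl⟩⟩
  rw [← sub_le_iff_le_add']
  apply le_csInf h2
  rintro s2 ⟨l2, hl2, rfl⟩
  rw [sub_le_iff_le_add', ← sub_le_iff_le_add]
  apply le_csInf h1
  rintro s1 ⟨l1, hl1, rfl⟩
  rw [sub_le_iff_le_add]
  obtain ⟨hcn, hlen⟩ := IsChainBetween.trans hl1 hl2
  calc chainDist x z ≤ chainLength (l1 ++ l2.tail) := chainDist_le hcn
    _ = chainLength l1 + chainLength l2 := hlen

lemma chainLength_prefix_le (l q : List X) : chainLength l ≤ chainLength (l ++ q) := by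
  induction l with
  | nil => simpa [chainLength_nil] using chainLength_nonneg q
  | cons a t ih =>
    cases t with
    | nil =>
      simpa [chainLength_singleton] using chainLength_nonneg (a :: q)
    | cons b u =>
      simp only [List.cons_append] at *
      rw [chainLength_cons_cons, chainLength_cons_cons]
      linarith [ih]

lemma exists_chain_lt (hb03 : ∀ x y : X, ∃ l : List X, IsChainBetween l x y)
    {x y : X} {r : ℝ} (h : chainDist x y < r) :
    ∃ l : List X, IsChainBetween l x y ∧ chainLength l < r := by
  obtain ⟨l0, hl0⟩ := hb03 x y
  obtain ⟨s, ⟨l, hl, rfl⟩, hs⟩ :=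
    exists_lt_of_csInf_lt (⟨chainLength l0, ⟨l0, hl0, rfl⟩⟩ :
      {s : ℝ | ∃ l : List X, IsChainBetween l x y ∧ s = chainLength l}.Nonempty) h
  exact ⟨l, hl, hs⟩

end API

section Walk
variable {X : Type*} [MetricSpace X] [PartialOrder X] [Inhabited X] (c : ℕ → List X)

/-- Walk state: (current chain index k, consumed prefix p, remaining suffix r).
Invariant: `p ++ r = c k`, `r ≠ []`; the current point is `r.headI`. -/
def chainWalk : ℕ → ℕ × List X × List X
  | 0 => (0, [], c 0)
  | n+1 =>
    if (chainWalk n).2.2.tail.isEmpty then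
      ((chainWalk n).1 + 1, [], c ((chainWalk n).1 + 1))
    else
      ((chainWalk n).1, (chainWalk n).2.1 ++ [(chainWalk n).2.2.headI], (chainWalk n).2.2.tail)

lemma chainWalk_succ_pos {n : ℕ} (h : (chainWalk c n).2.2.tail.isEmpty) :
    chainWalk c (n+1) = ((chainWalk c n).1 + 1, [], c ((chainWalk c n).1 + 1)) := by
  rw [chainWalk, if_pos h]

lemma chainWalk_succ_neg {n : ℕ} (h : ¬ (chainWalk c n).2.2.tail.isEmpty) :
    chainWalk c (n+1) =
      ((chainWalk c n).1, (chainWalk c n).2.1 ++ [(chainWalk c n).2.2.headI],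
        (chainWalk c n).2.2.tail) := by
  rw [chainWalk, if_neg h]

variable {c}
variable {y : ℕ → X} (hc : ∀ k, IsChainBetween (c k) (y k) (y (k+1)))
include hc

lemma c_ne_nil (k : ℕ) : c k ≠ [] := by
  intro h
  have := (hc k).1
  rw [h] at this; simp at this

lemma chainWalk_inv (n : ℕ) :
    (chainWalk c n).2.1 ++ (chainWalk c n).2.2 = c (chainWalk c n).1 ∧
      (chainWalk c n).2.2 ≠ [] := by
  induction n with
  | zero => exact ⟨by simp [chainWalk], c_ne_nil hc 0⟩
  | succ n ih =>
    by_cases h : (chainWalk c n).2.2.tail.isEmpty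
    · rw [chainWalk_succ_pos c h]
      exact ⟨by simp, c_ne_nil hc _⟩
    · rw [chainWalk_succ_neg c h]
      refine ⟨?_, by simpa [List.isEmpty_iff] using h⟩
      dsimp only
      obtain ⟨hpr, hne⟩ := ih
      cases hr : (chainWalk c n).2.2 with
      | nil => exact absurd hr hne
      | cons a t =>
        rw [hr] at hpr
        simpa [List.append_assoc] using hpr

/-- The current point of the walk. -/
lemma headI_eq_of_head? {l : List X} {v : X} (h : l.head? = some v) : l.headI = v := by
  cases l with
  | nil => simp at h
  | cons a t =>
    simp only [List.head?_cons, Option.some.injEq] at h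
    simpa using h

lemma chainWalk_comparable (n : ℕ) :
    (chainWalk c n).2.2.headI ≤ (chainWalk c (n+1)).2.2.headI ∨
      (chainWalk c (n+1)).2.2.headI ≤ (chainWalk c n).2.2.headI := by
  obtain ⟨hpr, hne⟩ := chainWalk_inv hc n
  by_cases h : (chainWalk c n).2.2.tail.isEmpty
  · rw [chainWalk_succ_pos c h]
    dsimp only
    cases hr : (chainWalk c n).2.2 with
    | nil => exact absurd hr hne
    | cons a t =>
      have ht : t = [] := by
        have := h; rw [hr] at this; simpa [List.isEmpty_iff] using this
      subst ht
      rw [hr] at hpr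
      have hlast : (c (chainWalk c n).1).getLast? = some a := by
        rw [← hpr]; exact List.getLast?_concat
      have hya : a = y ((chainWalk c n).1 + 1) := by
        have := (hc (chainWalk c n).1).2.2.1
        rw [hlast] at this
        exact (Option.some.injEq _ _ ▸ this : _)
      have hhead : (c ((chainWalk c n).1 + 1)).headI = y ((chainWalk c n).1 + 1) :=
        headI_eq_of_head? hc (hc _).2.1
      rw [hhead]
      simp only [List.headI_cons]
      rw [hya]
      exact Or.inl le_rfl
  · rw [chainWalk_succ_neg c h]
    dsimp only
    cases hr : (chainWalk c n).2.2 with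
    | nil => exact absurd hr hne
    | cons a t =>
      cases t with
      | nil => rw [hr] at h; simp at h
      | cons b u =>
        have hchain : List.Chain' (fun a b : X => a ≤ b ∨ b ≤ a) (a :: b :: u) := by
          have := (hc (chainWalk c n).1).2.2.2
          rw [← hpr, hr] at this
          exact this.suffix ⟨(chainWalk c n).2.1, rfl⟩
        simpa using (List.isChain_cons_cons.mp hchain).1

lemma chainWalk_bound (n : ℕ) :
    chainDist (y (chainWalk c n).1) ((chainWalk c n).2.2.headI)
        ≤ chainLength (c (chainWalk c n).1) ∧
      dist (y (chainWalk c n).1) ((chainWalk c n).2.2.headI)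
        ≤ chainLength (c (chainWalk c n).1) := by
  obtain ⟨hpr, hne⟩ := chainWalk_inv hc n
  cases hr : (chainWalk c n).2.2 with
  | nil => exact absurd hr hne
  | cons a t =>
    rw [hr] at hpr
    simp only [List.headI_cons]
    by_cases hp : (chainWalk c n).2.1 = []
    · rw [hp] at hpr
      simp only [List.nil_append] at hpr
      have hya : a = y (chainWalk c n).1 := by
        have := (hc (chainWalk c n).1).2.1
        rw [← hpr] at this
        simpa using this
      rw [hya]
      constructor
      · exact le_trans (chainDist_self_nonpos _) (chainLength_nonneg _)
      · simpa using chainLength_nonneg (c (chainWalk c n).1)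
    · have hq : IsChainBetween ((chainWalk c n).2.1 ++ [a]) (y (chainWalk c n).1) a := by
        refine ⟨?_, ?_, List.getLast?_concat, ?_⟩
        · rw [List.length_append]
          have := List.length_pos_iff.mpr hp
          simp only [List.length_singleton]
          omega
        · rw [List.head?_append_of_ne_nil _ hp]
          have := (hc (chainWalk c n).1).2.1
          rw [← hpr, List.head?_append_of_ne_nil _ hp] at this
          exact this
        · have := (hc (chainWalk c n).1).2.2.2
          rw [← hpr] at this
          exact this.prefix ⟨t, by simp⟩
      have hle : chainLength ((chainWalk c n).2.1 ++ [a]) ≤ chainLength (c (chainWalk c n).1) := by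
        calc chainLength ((chainWalk c n).2.1 ++ [a])
            ≤ chainLength (((chainWalk c n).2.1 ++ [a]) ++ t) := chainLength_prefix_le _ _
          _ = chainLength (c (chainWalk c n).1) := by rw [← hpr]; simp
      exact ⟨le_trans (chainDist_le hq) hle, le_trans (dist_le_chainLength hq) hle⟩

lemma chainWalk_fst_mono : Monotone (fun n => (chainWalk c n).1) := by
  apply monotone_nat_of_le_succ
  intro n
  by_cases h : (chainWalk c n).2.2.tail.isEmpty
  · rw [chainWalk_succ_pos c h]; exact Nat.le_succ _
  · rw [chainWalk_succ_neg c h]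

lemma chainWalk_progress : ∀ L n, (chainWalk c n).2.2.length = L →
    (chainWalk c n).1 < (chainWalk c (n + L)).1 := by
  intro L
  induction L using Nat.strong_induction_on with
  | _ L ih =>
    intro n hL
    obtain ⟨hpr, hne⟩ := chainWalk_inv hc n
    by_cases h : (chainWalk c n).2.2.tail.isEmpty
    · have hL1 : L = 1 := by
        cases hr : (chainWalk c n).2.2 with
        | nil => exact absurd hr hne
        | cons a t =>
          have : t = [] := by
            have := h; rw [hr] at this; simpa [List.isEmpty_iff] using this
          rw [hr, this] at hL
          simpa using hL.symm
      subst hL1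
      rw [chainWalk_succ_pos c h]
      exact Nat.lt_succ_self _
    · have htne : (chainWalk c n).2.2.tail ≠ [] := by simpa [List.isEmpty_iff] using h
      have hL2 : 2 ≤ L := by
        cases hr : (chainWalk c n).2.2 with
        | nil => exact absurd hr hne
        | cons a t =>
          rw [hr] at htne
          simp only [List.tail_cons] at htne
          rw [hr] at hL
          simp only [List.length_cons] at hL
          have := List.length_pos_iff.mpr htne
          omega
      have hnext : (chainWalk c (n+1)).2.2.length = L - 1 := by
        rw [chainWalk_succ_neg c h]
        dsimp only
        rw [List.length_tail, hL]
      have := ih (L-1) (by omega) (n+1) hnext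
      rw [chainWalk_succ_neg c h] at this
      dsimp only at this
      have harith : n + 1 + (L - 1) = n + L := by omega
      rw [harith] at this
      exact this

lemma chainWalk_unbounded : ∀ b : ℕ, ∃ n, b ≤ (chainWalk c n).1 := by
  intro b
  induction b with
  | zero => exact ⟨0, Nat.zero_le _⟩
  | succ b ihb =>
    obtain ⟨n, hn⟩ := ihb
    refine ⟨n + (chainWalk c n).2.2.length, ?_⟩
    have := chainWalk_progress hc (chainWalk c n).2.2.length n rfl
    omega

end Walk

/-- If `d` is complete, (b03) holds and (a06) holds, then the chain metric `e`
is complete: every `e`-Cauchy sequence `e`-converges. -/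
theorem chainDist_complete {X : Type*} [MetricSpace X] [PartialOrder X] [CompleteSpace X]
    (hb03 : ∀ x y : X, ∃ l : List X, IsChainBetween l x y)
    (ha06 : ∀ (x : ℕ → X) (l : X),
      (∀ n, x n ≤ x (n + 1) ∨ x (n + 1) ≤ x n) →
      Tendsto x atTop (𝓝 l) →
      ∃ q : ℕ → ℕ, StrictMono q ∧ ∀ n, x (q n) ≤ l ∨ l ≤ x (q n)) :
    ∀ x : ℕ → X,
      (∀ ε : ℝ, 0 < ε → ∃ N : ℕ, ∀ m ≥ N, ∀ n ≥ N, chainDist (x m) (x n) < ε) →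
      ∃ l : X, Tendsto (fun n => chainDist (x n) l) atTop (𝓝 0) := by
  intro x hx
  haveI : Inhabited X := ⟨x 0⟩
  -- d-Cauchy, get the d-limit L
  have hdc : CauchySeq x := by
    rw [Metric.cauchySeq_iff]
    intro ε hε
    obtain ⟨N, hN⟩ := hx ε hε
    exact ⟨N, fun m hm n hn =>
      lt_of_le_of_lt (dist_le_chainDist hb03 _ _) (hN m hm n hn)⟩
  obtain ⟨L, hL⟩ := cauchySeq_tendsto_of_complete hdc
  -- choose a rapidly Cauchy subsequence
  have hNf : ∀ k : ℕ, ∃ N : ℕ, ∀ m ≥ N, ∀ n ≥ N, chainDist (x m) (x n) < (1/2 : ℝ)^k :=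
    fun k => hx _ (by positivity)
  choose Nf hNf using hNf
  set φ : ℕ → ℕ := fun k => Nat.rec (Nf 0) (fun k ih => max (Nf (k+1)) (ih + 1)) k with hφ
  have hφ_succ : ∀ k, φ (k+1) = max (Nf (k+1)) (φ k + 1) := fun k => rfl
  have hφ_mono : StrictMono φ := by
    apply strictMono_nat_of_lt_succ
    intro k
    rw [hφ_succ]
    omega
  have hφ_ge : ∀ k, Nf k ≤ φ k := by
    intro k
    cases k with
    | zero => exact le_refl _
    | succ k => rw [hφ_succ]; omega
  set y : ℕ → X := fun k => x (φ k) with hy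
  have hyc : ∀ k, chainDist (y k) (y (k+1)) < (1/2 : ℝ)^k := by
    intro k
    exact hNf k (φ k) (hφ_ge k) (φ (k+1)) (le_trans (hφ_ge k) (hφ_mono (Nat.lt_succ_self k)).le)
  -- choose the chains
  have hcc : ∀ k, ∃ l : List X, IsChainBetween l (y k) (y (k+1)) ∧ chainLength l < (1/2 : ℝ)^k :=
    fun k => exists_chain_lt hb03 (hyc k)
  choose c hc hclen using hcc
  -- the walk
  set z : ℕ → X := fun n => (chainWalk c n).2.2.headI with hz
  set κ : ℕ → ℕ := fun n => (chainWalk c n).1 with hκ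
  have hκ_tendsto : Tendsto κ atTop atTop :=
    tendsto_atTop_atTop_of_monotone (chainWalk_fst_mono hc) (chainWalk_unbounded hc)
  -- y tends to L
  have hyL : Tendsto y atTop (𝓝 L) := hL.comp hφ_mono.tendsto_atTop
  -- z tends to L
  have hpow : Tendsto (fun n => ((1:ℝ)/2)^(κ n)) atTop (𝓝 0) :=
    (tendsto_pow_atTop_nhds_zero_of_lt_one (by norm_num) (by norm_num)).comp hκ_tendsto
  have hdyz : ∀ n, dist (z n) L ≤ (1/2 : ℝ)^(κ n) + dist (y (κ n)) L := by
    intro n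
    calc dist (z n) L ≤ dist (z n) (y (κ n)) + dist (y (κ n)) L := dist_triangle _ _ _
      _ ≤ (1/2 : ℝ)^(κ n) + dist (y (κ n)) L := by
          have := (chainWalk_bound hc n).2
          rw [dist_comm]
          exact add_le_add (le_trans this (hclen _).le) le_rfl
  have hzL : Tendsto z atTop (𝓝 L) := by
    rw [tendsto_iff_dist_tendsto_zero]
    apply squeeze_zero (fun n => dist_nonneg) hdyz
    have h2 : Tendsto (fun n => dist (y (κ n)) L) atTop (𝓝 0) :=
      (tendsto_iff_dist_tendsto_zero.mp hyL).comp hκ_tendsto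
    simpa using hpow.add h2
  -- apply a06
  obtain ⟨q, hq, hcomp⟩ := ha06 z L (chainWalk_comparable hc) hzL
  -- conclude
  refine ⟨L, ?_⟩
  rw [Metric.tendsto_atTop]
  intro ε hε
  obtain ⟨N, hN⟩ := hx (ε/3) (by linarith)
  obtain ⟨K0, hK0⟩ := exists_pow_lt_of_lt_one (show (0:ℝ) < ε/3 by linarith)
    (show (1/2 : ℝ) < 1 by norm_num)
  -- choose a good point on the walk
  have hev : ∀ᶠ m in atTop, max K0 N ≤ κ (q m) ∧ dist (z (q m)) L < ε/3 := by
    have h1 : Tendsto (fun m => κ (q m)) atTop atTop := hκ_tendsto.comp hq.tendsto_atTop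
    have h2 : Tendsto (fun m => dist (z (q m)) L) atTop (𝓝 0) :=
      (tendsto_iff_dist_tendsto_zero.mp hzL).comp hq.tendsto_atTop
    filter_upwards [h1.eventually_ge_atTop (max K0 N),
      h2.eventually (gt_mem_nhds (show (0:ℝ) < ε/3 by linarith))] with m hm1 hm2
    exact ⟨hm1, hm2⟩
  obtain ⟨m, hm1, hm2⟩ := hev.exists
  set w := q m
  set j := κ w with hj
  have hjK0 : K0 ≤ j := le_trans (le_max_left _ _) hm1
  have hjN : N ≤ j := le_trans (le_max_right _ _) hm1
  -- three bounds
  have t2 : chainDist (y j) (z w) < ε/3 := by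
    calc chainDist (y j) (z w) ≤ chainLength (c j) := (chainWalk_bound hc w).1
      _ < (1/2 : ℝ)^j := hclen j
      _ ≤ (1/2 : ℝ)^K0 := pow_le_pow_of_le_one (by norm_num) (by norm_num) hjK0
      _ < ε/3 := hK0
  have t3 : chainDist (z w) L < ε/3 :=
    lt_of_le_of_lt (chainDist_le_dist (hcomp m)) hm2
  refine ⟨N, fun n hn => ?_⟩
  have t1 : chainDist (x n) (y j) < ε/3 := by
    apply hN n hn (φ j)
    exact le_trans hjN (hφ_mono.le_apply)
  have htri : chainDist (x n) L ≤ chainDist (x n) (y j) + chainDist (y j) (z w)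
      + chainDist (z w) L := by
    calc chainDist (x n) L ≤ chainDist (x n) (z w) + chainDist (z w) L :=
          chainDist_triangle hb03 _ _ _
      _ ≤ (chainDist (x n) (y j) + chainDist (y j) (z w)) + chainDist (z w) L :=
          add_le_add (chainDist_triangle hb03 _ _ _) le_rfl
  have hnn : 0 ≤ chainDist (x n) L := chainDist_nonneg hb03 _ _
  rw [Real.dist_eq, abs_of_nonneg (by simpa using hnn)]
  simp only [sub_zero]
  linarith
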